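/- Let α satisfy assumptions (I)–(III) with degeneracy parameter μ, and assume α degenerates weakly, i.e. 0 ≤ μ < 1. Then for every u ∈ V²_α(x₀,ℓ) and every φ ∈ V¹_α(x₀,ℓ) with lim_{x → x₀⁺} φ(x) = 0, one has lim_{x → x₀⁺} α(x)·φ(x)·u'(x) = 0. -/

import Mathlib

open MeasureTheory Set Filter Topology

/-- Assumptions (I)-(III) on the degenerate weight `α` on `[x₀, ℓ]`, with degeneracy
parameter `μ`: `α` is positive on `(x₀, ℓ]` and vanishes at `x₀`; `α` is continuous on
`[x₀, ℓ]` and `C¹` on `(x₀, ℓ]` with derivative `α'`; and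
`μ = sup_{x₀ < x ≤ ℓ} (x - x₀)|α'(x)|/α(x) = lim_{x → x₀⁺} (x - x₀)|α'(x)|/α(x) < 2`. -/
def DegWeight (x₀ ℓ μ : ℝ) (α α' : ℝ → ℝ) : Prop :=
  (∀ x ∈ Ioc x₀ ℓ, 0 < α x) ∧ α x₀ = 0 ∧
  ContinuousOn α (Icc x₀ ℓ) ∧
  (∀ x ∈ Ioc x₀ ℓ, HasDerivWithinAt α (α' x) (Ioc x₀ ℓ) x) ∧
  ContinuousOn α' (Ioc x₀ ℓ) ∧
  IsLUB ((fun x => (x - x₀) * |α' x| / α x) '' Ioc x₀ ℓ) μ ∧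
  Tendsto (fun x => (x - x₀) * |α' x| / α x) (𝓝[>] x₀) (𝓝 μ) ∧
  μ < 2

/-- `u ∈ V¹_α(x₀, ℓ)` (real-valued): `u ∈ L²(x₀, ℓ)`, `u` is locally absolutely continuous
on `(x₀, ℓ]` with a.e. derivative `u'` (expressed via the fundamental theorem of calculus on
compact subintervals of `(x₀, ℓ]`), and `√α · u' ∈ L²(x₀, ℓ)`. -/
def MemV1 (x₀ ℓ : ℝ) (α u u' : ℝ → ℝ) : Prop :=
  MemLp u 2 (volume.restrict (Ioo x₀ ℓ)) ∧
  (∀ x y : ℝ, x₀ < x → x ≤ y → y ≤ ℓ →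
    IntervalIntegrable u' volume x y ∧ u y - u x = ∫ t in x..y, u' t) ∧
  MemLp (fun x => Real.sqrt (α x) * u' x) 2 (volume.restrict (Ioo x₀ ℓ))

/-- `u ∈ V²_α(x₀, ℓ)` (real-valued): `u ∈ V¹_α(x₀, ℓ)` and `α·u' ∈ H¹(x₀, ℓ)`, i.e.
`α·u' ∈ L²`, it is absolutely continuous with a.e. derivative `g' = (α u')' ∈ L²`. -/
def MemV2 (x₀ ℓ : ℝ) (α u u' g' : ℝ → ℝ) : Prop :=
  MemV1 x₀ ℓ α u u' ∧
  MemLp (fun x => α x * u' x) 2 (volume.restrict (Ioo x₀ ℓ)) ∧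
  MemLp g' 2 (volume.restrict (Ioo x₀ ℓ)) ∧
  ∀ x y : ℝ, x₀ < x → x ≤ y → y ≤ ℓ →
    IntervalIntegrable g' volume x y ∧ α y * u' y - α x * u' x = ∫ t in x..y, g' t

/-- If `α` satisfies (I)-(III) with degeneracy parameter `μ` and degenerates
weakly (`0 ≤ μ < 1`), then for every `u ∈ V²_α(x₀, ℓ)` and every `φ ∈ V¹_α(x₀, ℓ)` with
`lim_{x → x₀⁺} φ(x) = 0` one has `lim_{x → x₀⁺} α(x)·φ(x)·u'(x) = 0`. -/
theorem limit_au'phi_weak (x₀ ℓ μ : ℝ) (α α' : ℝ → ℝ) (hxl : x₀ < ℓ)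
    (h : DegWeight x₀ ℓ μ α α') (hμ0 : 0 ≤ μ) (hμ1 : μ < 1)
    (u u' g' : ℝ → ℝ) (hu : MemV2 x₀ ℓ α u u' g')
    (φ φ' : ℝ → ℝ) (hφ : MemV1 x₀ ℓ α φ φ')
    (hφ0 : Tendsto φ (𝓝[>] x₀) (𝓝 0)) :
    Tendsto (fun x => α x * φ x * u' x) (𝓝[>] x₀) (𝓝 0) := by
  -- `α·u'` is bounded near `x₀`, and `φ → 0`, so the product tends to `0`.
  set x₁ : ℝ := (x₀ + ℓ) / 2 with hx₁def
  have hx₀x₁ : x₀ < x₁ := by simp [hx₁def]; linarith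
  have hx₁ℓ : x₁ < ℓ := by simp [hx₁def]; linarith
  -- g' is integrable on Ioo x₀ ℓ
  have hg2 : MemLp g' 2 (volume.restrict (Ioo x₀ ℓ)) := hu.2.2.1
  have hfin : IsFiniteMeasure (volume.restrict (Ioo x₀ ℓ)) := by
    constructor
    rw [Measure.restrict_apply_univ]
    exact measure_Ioo_lt_top
  have hgint : IntegrableOn g' (Ioo x₀ ℓ) volume := by
    have := hg2.integrable (by norm_num)
    exact this
  set C : ℝ := ∫ t in Ioo x₀ ℓ, |g' t| with hCdef
  have hbound : ∀ᶠ x in 𝓝[>] x₀, |α x * u' x| ≤ |α x₁ * u' x₁| + C := by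
    filter_upwards [Ioo_mem_nhdsGT_of_mem (Set.left_mem_Ico.2 hx₀x₁)] with x hx
    have hx0 : x₀ < x := hx.1
    have hxx1 : x ≤ x₁ := hx.2.le
    obtain ⟨hint, heq⟩ := hu.2.2.2 x x₁ hx0 hxx1 hx₁ℓ.le
    have hxeq : α x * u' x = α x₁ * u' x₁ - ∫ t in x..x₁, g' t := by linarith
    have hsub : Ioc x x₁ ⊆ Ioo x₀ ℓ := fun t ht => ⟨lt_of_lt_of_le hx0 ht.1.le, lt_of_le_of_lt ht.2 hx₁ℓ⟩
    have hbd : |∫ t in x..x₁, g' t| ≤ C := by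
      calc |∫ t in x..x₁, g' t| ≤ ∫ t in Ioc x x₁, |g' t| := by
            rw [← intervalIntegral.integral_of_le hxx1]
            exact intervalIntegral.abs_integral_le_integral_abs hxx1
        _ ≤ ∫ t in Ioo x₀ ℓ, |g' t| := by
            apply setIntegral_mono_set (hgint.abs)
            · exact Filter.Eventually.of_forall (fun t => abs_nonneg _)
            · exact Filter.Eventually.of_forall hsub
    calc |α x * u' x| = |α x₁ * u' x₁ - ∫ t in x..x₁, g' t| := by rw [hxeq]
      _ ≤ |α x₁ * u' x₁| + |∫ t in x..x₁, g' t| := abs_sub _ _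
      _ ≤ |α x₁ * u' x₁| + C := by linarith
  have hprod : Tendsto (fun x => φ x * (α x * u' x)) (𝓝[>] x₀) (𝓝 0) := by
    apply hφ0.zero_mul_isBoundedUnder_le
    refine ⟨|α x₁ * u' x₁| + C, ?_⟩
    simpa [Function.comp] using hbound
  convert hprod using 2 with x
  ring
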